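/- arXiv:1908.11009 — 3 statements merged into one kernel-verified Lean document; each statement's English description precedes it below -/
import Mathlib

section
/- For every nonnegative integer n, $\frac{1}{n+1}\sum_{l=0}^{n+1}\binom{n+1}{l}\Big((\tfrac12)_{n+1-l,\lambda}-(-\tfrac12)_{n+1-l,\lambda}\Big) B_{l,\lambda}^{(c)}(x,y) = \sum_{k=0}^n\sum_{m=0}^{\lfloor k/2\rfloor}\binom{n}{k}(x)_{n-k,\lambda}(-1)^m\lambda^{k-2m}y^{2m}S_1(k,2m)$. -/
open PowerSeries Finset Complex

/-- The degenerate falling factorial `(x)_{n,λ} = x(x-λ)⋯(x-(n-1)λ)`. -/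
noncomputable def dff (l x : ℂ) (n : ℕ) : ℂ := ∏ j ∈ Finset.range n, (x - j * l)

/-- Exponential generating function of a sequence: `Σ f n * t^n / n!`. -/
noncomputable def egf (f : ℕ → ℂ) : PowerSeries ℂ := PowerSeries.mk fun n => f n / n.factorial

/-- The degenerate exponential `e_λ^x(t) = (1+λt)^{x/λ} = Σ (x)_{n,λ} t^n/n!` as a power series. -/
noncomputable def degExp (l x : ℂ) : PowerSeries ℂ := egf (dff l x)

/-- The degenerate cosine `cos_λ^{(y)}(t) = cos((y/λ) log(1+λt)) = (e_λ^{iy}(t)+e_λ^{-iy}(t))/2`. -/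
noncomputable def degCos (l y : ℂ) : PowerSeries ℂ :=
  (PowerSeries.C : ℂ →+* PowerSeries ℂ) (1/2) * (degExp l (Complex.I * y) + degExp l (-(Complex.I * y)))

/-- The degenerate sine `sin_λ^{(y)}(t) = sin((y/λ) log(1+λt)) = (e_λ^{iy}(t)-e_λ^{-iy}(t))/(2i)`. -/
noncomputable def degSin (l y : ℂ) : PowerSeries ℂ :=
  (PowerSeries.C : ℂ →+* PowerSeries ℂ) (1/(2*Complex.I)) * (degExp l (Complex.I * y) - degExp l (-(Complex.I * y)))

/-- The exponential series `e^{at} = Σ a^n t^n/n!`. -/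
noncomputable def expS (a : ℂ) : PowerSeries ℂ := egf (fun n => a ^ n)

/-- The series of `log(1+t)`. -/
noncomputable def logS : PowerSeries ℂ := PowerSeries.mk fun n => if n = 0 then 0 else (-1)^(n+1) / n

lemma coeff_DlogS (k : ℕ) : (coeff k) (d⁄dX ℂ logS) = (-1)^k := by
  rw [coeff_derivative]
  simp only [logS, coeff_mk, Nat.succ_ne_zero, if_false]
  have : ((k:ℂ)+1) ≠ 0 := by exact_mod_cast Nat.succ_ne_zero k
  push_cast
  field_simp
  ring

lemma one_add_X_mul_DlogS : ((1 + X) * d⁄dX ℂ logS : PowerSeries ℂ) = 1 := by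
  ext k
  rw [add_mul, one_mul, map_add]
  cases k with
  | zero => simp [coeff_DlogS, PowerSeries.coeff_zero_eq_constantCoeff]
  | succ m => simp [coeff_succ_X_mul, coeff_DlogS, pow_succ]

lemma crec (j k : ℕ) :
    ((k:ℂ)+1) * coeff (k+1) (logS^(j+1)) + k * coeff k (logS^(j+1))
      = ((j:ℂ)+1) * coeff k (logS^j) := by
  have h : (1 + X) * d⁄dX ℂ (logS^(j+1)) = ((j:ℂ)+1) • logS ^ j := by
    rw [Derivation.leibniz_pow _ _ (j+1)]
    rw [show ((j:ℂ)+1) • logS ^ j = ((j+1:ℕ):ℂ) • logS ^ j by push_cast; ring_nf]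
    rw [Nat.cast_smul_eq_nsmul]
    simp only [smul_eq_mul, nsmul_eq_mul, Nat.add_sub_cancel]
    push_cast
    linear_combination ((j:ℂ⟦X⟧)+1) * (logS ^ j) * one_add_X_mul_DlogS
  have h2 := congrArg (coeff k) h
  rw [add_mul, one_mul, map_add, map_smul, smul_eq_mul] at h2
  cases k with
  | zero =>
    simp only [coeff_derivative, coeff_zero_X_mul] at h2
    push_cast at h2 ⊢
    linear_combination h2
  | succ m =>
    simp only [coeff_derivative, coeff_succ_X_mul] at h2
    push_cast at h2 ⊢
    linear_combination h2

/-- The (signed) Stirling numbers of the first kind, defined from `logS`. -/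
noncomputable def sfn (k j : ℕ) : ℂ := (k.factorial : ℂ) * coeff k (logS ^ j) / j.factorial

lemma sfn_zero_zero : sfn 0 0 = 1 := by simp [sfn]

lemma sfn_succ_zero (k : ℕ) : sfn (k+1) 0 = 0 := by
  simp [sfn, coeff_one]

lemma sfn_eq_zero {k j : ℕ} (h : k < j) : sfn k j = 0 := by
  have hdvd : (X : ℂ⟦X⟧) ^ j ∣ logS ^ j :=
    pow_dvd_pow_of_dvd (X_dvd_iff.mpr (by simp [logS])) j
  have := (X_pow_dvd_iff.mp hdvd) k h
  simp [sfn, this]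

lemma sfn_rec (k j : ℕ) : sfn (k+1) (j+1) = sfn k j - k * sfn k (j+1) := by
  have h := crec j k
  have hk : ((k:ℂ)+1) ≠ 0 := by exact_mod_cast Nat.succ_ne_zero k
  have hj : ((j:ℂ)+1) ≠ 0 := by exact_mod_cast Nat.succ_ne_zero j
  have hkf : ((k.factorial : ℂ)) ≠ 0 := by exact_mod_cast k.factorial_ne_zero
  have hjf : ((j.factorial : ℂ)) ≠ 0 := by exact_mod_cast j.factorial_ne_zero
  simp only [sfn, Nat.factorial_succ]
  push_cast
  field_simp
  linear_combination h

lemma cast_mul_sfn_zero (k : ℕ) : (k:ℂ) * sfn k 0 = 0 := by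
  cases k with
  | zero => simp
  | succ m => rw [sfn_succ_zero, mul_zero]

lemma dff_eq (l z : ℂ) (k : ℕ) :
    dff l z k = ∑ j ∈ Finset.range (k+1), z^j * l^(k-j) * sfn k j := by
  induction k with
  | zero => simp [dff, sfn_zero_zero]
  | succ k ih =>
    have hd : dff l z (k+1) = dff l z k * (z - k*l) := Finset.prod_range_succ _ _
    have hshift : ∑ j ∈ Finset.range (k+1), (k:ℂ) * z^(j+1) * l^(k-j) * sfn k (j+1)
        = ∑ j ∈ Finset.range (k+1), (k:ℂ) * z^j * l^(k+1-j) * sfn k j := by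
      have h1 := Finset.sum_range_succ' (fun j => (k:ℂ) * z^j * l^(k+1-j) * sfn k j) (k+1)
      have h2 := Finset.sum_range_succ (fun j => (k:ℂ) * z^j * l^(k+1-j) * sfn k j) (k+1)
      rw [h2] at h1
      simp only [Nat.succ_sub_succ, Nat.sub_self, Nat.sub_zero, pow_zero,
        sfn_eq_zero (Nat.lt_succ_self k), mul_zero, add_zero] at h1
      rw [show (k:ℂ) * 1 * l^(k+1) * sfn k 0 = l^(k+1) * ((k:ℂ) * sfn k 0) by ring,
        cast_mul_sfn_zero, mul_zero, add_zero] at h1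
      exact h1.symm
    rw [hd, ih]
    conv_rhs => rw [Finset.sum_range_succ']
    simp only [Nat.succ_sub_succ, sfn_rec, pow_zero, one_mul, sfn_succ_zero, mul_zero, add_zero]
    rw [Finset.sum_mul]
    have expand : ∑ j ∈ Finset.range (k+1), z ^ (j+1) * l ^ (k - j) * (sfn k j - (k:ℂ) * sfn k (j+1))
        = (∑ j ∈ Finset.range (k+1), z * (z^j * l^(k-j) * sfn k j))
          - ∑ j ∈ Finset.range (k+1), (k:ℂ) * z^(j+1) * l^(k-j) * sfn k (j+1) := by
      rw [← Finset.sum_sub_distrib]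
      exact Finset.sum_congr rfl fun j _ => by ring
    rw [expand, hshift, ← Finset.mul_sum]
    rw [show ∑ j ∈ Finset.range (k+1), (k:ℂ) * z^j * l^(k+1-j) * sfn k j
        = ((k:ℂ)*l) * ∑ j ∈ Finset.range (k+1), z^j * l^(k-j) * sfn k j by
      rw [Finset.mul_sum]
      refine Finset.sum_congr rfl fun j hj => ?_
      have hjk : j ≤ k := Nat.lt_succ_iff.mp (Finset.mem_range.mp hj)
      rw [show k+1-j = (k-j)+1 by omega, pow_succ]
      ring]
    rw [Finset.mul_sum, Finset.mul_sum, ← Finset.sum_sub_distrib]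
    exact Finset.sum_congr rfl fun j _ => by ring

lemma cos_sum (l yc : ℂ) (k : ℕ) :
    dff l (Complex.I * yc) k + dff l (-(Complex.I * yc)) k
      = ∑ m ∈ Finset.range (k/2+1), 2 * (-1)^m * l^(k-2*m) * yc^(2*m) * sfn k (2*m) := by
  rw [dff_eq, dff_eq, ← Finset.sum_add_distrib]
  have hne : ∀ j ∈ Finset.range (k+1),
      ((Complex.I*yc)^j * l^(k-j) * sfn k j + (-(Complex.I*yc))^j * l^(k-j) * sfn k j) ≠ 0 →
      Even j := by
    intro j _ h0
    by_contra hodd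
    apply h0
    rw [(Nat.odd_iff.mpr (Nat.not_even_iff.mp hodd)).neg_pow]
    ring
  rw [← Finset.sum_filter_of_ne hne]
  refine Finset.sum_nbij' (fun j => j/2) (fun m => 2*m) ?_ ?_ ?_ ?_ ?_
  · intro a ha
    simp only [Finset.mem_filter, Finset.mem_range] at ha ⊢
    omega
  · intro a ha
    simp only [Finset.mem_filter, Finset.mem_range] at ha ⊢
    constructor
    · omega
    · exact even_two_mul a
  · intro a ha
    simp only [Finset.mem_filter, Finset.mem_range] at ha
    obtain ⟨c, rfl⟩ := ha.2
    omega
  · intro a _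
    omega
  · intro a ha
    simp only [Finset.mem_filter, Finset.mem_range] at ha
    obtain ⟨m, rfl⟩ := ha.2
    rw [show m + m = 2*m by ring, show 2*m/2 = m by omega]
    rw [show (-(Complex.I*yc))^(2*m) = (Complex.I*yc)^(2*m) by
      rw [(even_two_mul m).neg_pow]]
    rw [show (Complex.I*yc)^(2*m) = (-1:ℂ)^m * yc^(2*m) by
      rw [mul_pow, pow_mul Complex.I, Complex.I_sq]]
    ring

theorem stmt6 (lam x y : ℝ) (Bc : ℕ → ℂ) (S1 : ℕ → ℕ → ℂ)
    (hBc : egf Bc * (degExp lam (1/2) - degExp lam (-(1/2))) =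
      PowerSeries.X * degExp lam x * degCos lam y)
    (hS1 : ∀ j, logS ^ j = (PowerSeries.C : ℂ →+* PowerSeries ℂ) (Nat.factorial j) * egf (fun k => S1 k j))
    (n : ℕ) :
    (1/(n+1) : ℂ) * ∑ l ∈ Finset.range (n+2), ((n+1).choose l : ℂ) *
        (dff lam (1/2) (n+1-l) - dff lam (-(1/2)) (n+1-l)) * Bc l =
      ∑ k ∈ Finset.range (n+1), ∑ m ∈ Finset.range (k/2+1),
        (n.choose k : ℂ) * dff lam x (n-k) * (-1)^m * (lam:ℂ)^(k-2*m) * (y:ℂ)^(2*m) *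
          S1 k (2*m) := by
  have hS : ∀ k j : ℕ, S1 k j = sfn k j := by
    intro k j
    have h := congrArg (coeff k) (hS1 j)
    rw [coeff_C_mul] at h
    simp only [egf, coeff_mk] at h
    have hkf : ((k.factorial : ℂ)) ≠ 0 := by exact_mod_cast k.factorial_ne_zero
    have hjf : ((j.factorial : ℂ)) ≠ 0 := by exact_mod_cast j.factorial_ne_zero
    rw [sfn, h]
    field_simp
  have hcoeffExp : ∀ (l z : ℂ) (k : ℕ), coeff k (degExp l z) = dff l z k / k.factorial := by
    intro l z k; simp [degExp, egf, coeff_mk]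
  have hcos : ∀ k : ℕ, (coeff k) (degCos lam y)
      = (∑ m ∈ Finset.range (k/2+1), (-1:ℂ)^m * (lam:ℂ)^(k-2*m) * (y:ℂ)^(2*m) * sfn k (2*m))
          / k.factorial := by
    intro k
    rw [degCos, coeff_C_mul, map_add, hcoeffExp, hcoeffExp, ← add_div, cos_sum]
    rw [Finset.sum_div, Finset.sum_div, Finset.mul_sum]
    exact Finset.sum_congr rfl fun m _ => by ring
  have hco := congrArg (coeff (n+1)) hBc
  rw [coeff_mul, Finset.Nat.sum_antidiagonal_eq_sum_range_succ_mk, mul_assoc,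
    coeff_succ_X_mul, coeff_mul, Finset.Nat.sum_antidiagonal_eq_sum_range_succ_mk] at hco
  simp only [map_sub, hcoeffExp, egf, coeff_mk, hcos] at hco
  simp only [show (-(1/2) : ℂ) = (-1/2 : ℂ) from by norm_num] at hco ⊢
  have step1 : (1/(n+1) : ℂ) * ∑ l ∈ Finset.range (n+2), ((n+1).choose l : ℂ) *
        (dff lam (1/2) (n+1-l) - dff lam (-1/2) (n+1-l)) * Bc l
      = ((n.factorial : ℂ)) * ∑ i ∈ Finset.range (n+2),
          Bc i / i.factorial *
            (dff lam (1/2) (n+1-i) / (n+1-i).factorial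
              - dff lam (-1/2) (n+1-i) / (n+1-i).factorial) := by
    rw [Finset.mul_sum, Finset.mul_sum]
    refine Finset.sum_congr rfl fun l hl => ?_
    have hln : l ≤ n+1 := Nat.lt_succ_iff.mp (Finset.mem_range.mp hl)
    have hch : (((n+1).choose l : ℕ) : ℂ) * l.factorial * (n+1-l).factorial
        = ((n+1).factorial : ℂ) := by
      exact_mod_cast congrArg (Nat.cast : ℕ → ℂ)
        (Nat.choose_mul_factorial_mul_factorial hln)
    have hn1 : ((n:ℂ)+1) ≠ 0 := by exact_mod_cast Nat.succ_ne_zero n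
    have hlf : ((l.factorial : ℂ)) ≠ 0 := by exact_mod_cast l.factorial_ne_zero
    have hnlf : (((n+1-l).factorial : ℂ)) ≠ 0 := by exact_mod_cast (n+1-l).factorial_ne_zero
    have hfac : ((n+1).factorial : ℂ) = ((n:ℂ)+1) * n.factorial := by
      rw [Nat.factorial_succ]; push_cast; ring
    rw [hfac] at hch
    set A := dff lam (1/2) (n+1-l)
    set B := dff lam (-1/2) (n+1-l)
    field_simp
    linear_combination (Bc l * (dff lam (1/2) (n+1-l) - dff lam (-1/2) (n+1-l))) * hch
  rw [step1, hco, Finset.mul_sum]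
  simp only [hS]
  rw [← Finset.sum_range_reflect (fun k => ∑ m ∈ Finset.range (k/2+1),
    (n.choose k : ℂ) * dff lam x (n-k) * (-1)^m * (lam:ℂ)^(k-2*m) * (y:ℂ)^(2*m) *
      sfn k (2*m)) (n+1)]
  refine Finset.sum_congr rfl fun i hi => ?_
  have hin : i ≤ n := Nat.lt_succ_iff.mp (Finset.mem_range.mp hi)
  have h1 : n + 1 - 1 - i = n - i := by omega
  have h2 : n - (n - i) = i := by omega
  rw [h1, h2]
  have hch : ((n.choose (n-i) : ℕ) : ℂ) * (n-i).factorial * i.factorial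
      = (n.factorial : ℂ) := by
    have := Nat.choose_mul_factorial_mul_factorial (Nat.sub_le n i)
    rw [h2] at this
    exact_mod_cast congrArg (Nat.cast : ℕ → ℂ) this
  rw [Nat.choose_symm hin] at hch
  rw [Finset.sum_div, Finset.mul_sum, Finset.mul_sum]
  refine Finset.sum_congr rfl fun m _ => ?_
  have hif : ((i.factorial : ℂ)) ≠ 0 := by exact_mod_cast i.factorial_ne_zero
  have hnif : (((n-i).factorial : ℂ)) ≠ 0 := by exact_mod_cast (n-i).factorial_ne_zero
  rw [← hch]
  field_simp
  rw [Nat.choose_symm hin]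
  ring
end

section
/- For every nonnegative integer n and complex number z, the type 2 Euler polynomial equals $E_n(z)=\sum_{k=0}^{n}E_{k,\lambda}(z)S_2(n,k)\lambda^{n-k}$, where $S_2(n,k)$ are the Stirling numbers of the second kind. -/
open PowerSeries Finset Complex

/- ### Auxiliary machinery -/

/-- The substitution series `φ = (e^{Lt} - 1)/L`. -/
noncomputable def phiS (L : ℂ) : PowerSeries ℂ := (PowerSeries.C (R := ℂ)) L⁻¹ * (expS L - 1)

/-- Substitution of `phiS L` into a power series, coefficientwise. -/
noncomputable def Phi (L : ℂ) (f : PowerSeries ℂ) : PowerSeries ℂ :=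
  PowerSeries.mk fun N => ∑ d ∈ Finset.range (N+1),
    PowerSeries.coeff (R := ℂ) d f * PowerSeries.coeff (R := ℂ) N (phiS L ^ d)

/-- Truncation polynomial of a power series. -/
noncomputable def Pol (N : ℕ) (f : PowerSeries ℂ) : Polynomial ℂ :=
  ∑ d ∈ Finset.range (N+1), Polynomial.C (PowerSeries.coeff (R := ℂ) d f) * Polynomial.X ^ d

/-- Evaluation of a polynomial at `phiS L`. -/
noncomputable def ev (L : ℂ) (p : Polynomial ℂ) : PowerSeries ℂ :=
  Polynomial.eval₂ ((PowerSeries.C (R := ℂ))) (phiS L) p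

lemma coeff_expS (a : ℂ) (n : ℕ) : PowerSeries.coeff (R := ℂ) n (expS a) = a ^ n / n.factorial := by
  simp [expS, egf]

lemma constantCoeff_expS (a : ℂ) : PowerSeries.constantCoeff (R := ℂ) (expS a) = 1 := by
  have := coeff_expS a 0
  simpa using this

lemma X_dvd_phiS (L : ℂ) : (PowerSeries.X : PowerSeries ℂ) ∣ phiS L := by
  rw [PowerSeries.X_dvd_iff]
  simp [phiS, constantCoeff_expS]

lemma coeff_phiS_pow_eq_zero {L : ℂ} {N d : ℕ} (h : N < d) :
    PowerSeries.coeff (R := ℂ) N (phiS L ^ d) = 0 := by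
  have hdvd : (PowerSeries.X : PowerSeries ℂ) ^ d ∣ phiS L ^ d :=
    pow_dvd_pow_of_dvd (X_dvd_phiS L) d
  exact PowerSeries.X_pow_dvd_iff.mp hdvd N h

lemma rescale_expS (L : ℂ) : PowerSeries.rescale L (expS 1) = expS L := by
  ext n
  simp [PowerSeries.coeff_rescale, coeff_expS, div_eq_mul_inv]

section WithS2

variable {S2 : ℕ → ℕ → ℂ}
  (hS2 : ∀ k, (expS 1 - 1) ^ k = (PowerSeries.C : ℂ →+* PowerSeries ℂ) (Nat.factorial k) * egf (fun n => S2 n k))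

include hS2

lemma coeff_pow_expS_sub_one (k n : ℕ) :
    PowerSeries.coeff (R := ℂ) n ((expS 1 - 1) ^ k) = (Nat.factorial k) * S2 n k / n.factorial := by
  rw [hS2 k, PowerSeries.coeff_C_mul]
  simp [egf, mul_div_assoc]

lemma S2_eq_zero {n k : ℕ} (h : n < k) : S2 n k = 0 := by
  have h0 : PowerSeries.coeff (R := ℂ) n ((expS 1 - 1) ^ k) = 0 := by
    have hdvd : (PowerSeries.X : PowerSeries ℂ) ^ k ∣ (expS 1 - 1) ^ k := by
      refine pow_dvd_pow_of_dvd ?_ k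
      rw [PowerSeries.X_dvd_iff]
      simp [constantCoeff_expS]
    exact PowerSeries.X_pow_dvd_iff.mp hdvd n h
  rw [coeff_pow_expS_sub_one hS2] at h0
  have hk : ((Nat.factorial k : ℂ)) ≠ 0 := by exact_mod_cast Nat.factorial_ne_zero k
  have hn : ((Nat.factorial n : ℂ)) ≠ 0 := by exact_mod_cast Nat.factorial_ne_zero n
  have hk' : ((Nat.factorial k : ℂ)) ≠ 0 := hk
  field_simp at h0
  exact (mul_eq_zero.mp (h0.trans (mul_zero _))).resolve_left hk'

lemma S2_zero_zero : S2 0 0 = 1 := by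
  have := coeff_pow_expS_sub_one hS2 0 0
  simpa using this.symm

lemma S2_succ_zero (n : ℕ) : S2 (n+1) 0 = 0 := by
  have := coeff_pow_expS_sub_one hS2 0 (n+1)
  simp at this
  have hn : ((Nat.factorial (n+1) : ℂ)) ≠ 0 := by exact_mod_cast Nat.factorial_ne_zero (n+1)
  field_simp at this
  exact this.symm.trans (zero_mul _)

omit hS2 in
lemma derivative_expS_one : (d⁄dX ℂ) (expS 1) = expS 1 := by
  have h0 : (d⁄dX ℂ) (expS 1) = PowerSeries.derivativeFun (expS 1) := rfl
  rw [h0]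

  ext n
  rw [← h0, PowerSeries.coeff_derivative]
  rw [coeff_expS, coeff_expS]
  have h1 : ((n+1 : ℕ) : ℂ) ≠ 0 := by exact_mod_cast Nat.succ_ne_zero n
  have h2 : ((Nat.factorial (n+1) : ℂ)) ≠ 0 := by exact_mod_cast Nat.factorial_ne_zero (n+1)
  have h3 : ((Nat.factorial n : ℂ)) ≠ 0 := by exact_mod_cast Nat.factorial_ne_zero n
  rw [one_pow, one_pow, Nat.factorial_succ]
  push_cast
  field_simp

lemma S2_recurrence (n k : ℕ) : S2 (n+1) (k+1) = ((k:ℂ)+1) * S2 n (k+1) + S2 n k := by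
  have hDE : (d⁄dX ℂ) (expS 1 - 1) = expS 1 := by
    rw [map_sub, derivative_expS_one, (d⁄dX ℂ).map_one_eq_zero, sub_zero]
  have hD := (d⁄dX ℂ).leibniz_pow (expS 1 - 1) (k+1)
  rw [hDE, Nat.add_sub_cancel] at hD
  have hmul : ((expS 1 - 1)^k • expS 1 : ℂ⟦X⟧) = (expS 1 - 1)^(k+1) + (expS 1 - 1)^k := by
    rw [smul_eq_mul]; ring
  rw [hmul] at hD
  have hco := congrArg (PowerSeries.coeff (R := ℂ) n) hD
  rw [PowerSeries.coeff_derivative, map_nsmul, map_add,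
    coeff_pow_expS_sub_one hS2, coeff_pow_expS_sub_one hS2, coeff_pow_expS_sub_one hS2] at hco
  rw [nsmul_eq_mul] at hco
  push_cast at hco
  have hnf : ((Nat.factorial n : ℂ)) ≠ 0 := by exact_mod_cast Nat.factorial_ne_zero n
  have hnf1 : ((Nat.factorial (n+1) : ℂ)) ≠ 0 := by exact_mod_cast Nat.factorial_ne_zero (n+1)
  have hkf : ((Nat.factorial k : ℂ)) ≠ 0 := by exact_mod_cast Nat.factorial_ne_zero k
  have hkf1 : ((Nat.factorial (k+1) : ℂ)) ≠ 0 := by exact_mod_cast Nat.factorial_ne_zero (k+1)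
  have hfs : ((Nat.factorial (n+1) : ℂ)) = ((n:ℂ)+1) * n.factorial := by
    rw [Nat.factorial_succ]; push_cast; ring
  have hfk : ((Nat.factorial (k+1) : ℂ)) = ((k:ℂ)+1) * k.factorial := by
    rw [Nat.factorial_succ]; push_cast; ring
  rw [hfs, hfk] at hco
  have hn1 : ((n:ℂ)+1) ≠ 0 := Nat.cast_add_one_ne_zero n
  have hk1 : ((k:ℂ)+1) ≠ 0 := Nat.cast_add_one_ne_zero k
  field_simp at hco
  have hc0 : ((k:ℂ)+1)*(k.factorial:ℂ)*(((n:ℂ)+1)*(n.factorial:ℂ)) ≠ 0 :=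
    mul_ne_zero (mul_ne_zero hk1 hkf) (mul_ne_zero hn1 hnf)
  refine mul_left_cancel₀ hc0 ?_
  linear_combination ((k:ℂ)+1)*(k.factorial:ℂ)*(((n:ℂ)+1)*(n.factorial:ℂ)) * hco

omit hS2 in
lemma dff_succ (l x : ℂ) (k : ℕ) : dff l x (k+1) = dff l x k * (x - k*l) :=
  Finset.prod_range_succ _ _

omit hS2 in
lemma dff_zero (l x : ℂ) : dff l x 0 = 1 := by simp [dff]

/-- Key identity at λ = 1 : `Σ_k (y)_k S2(n,k) = y^n`. -/
lemma starOne (y : ℂ) (N : ℕ) : ∑ k ∈ Finset.range (N+1), dff 1 y k * S2 N k = y ^ N := by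
  induction N with
  | zero => simp [dff_zero, S2_zero_zero hS2]
  | succ N ih =>
    rw [Finset.sum_range_succ']
    rw [S2_succ_zero hS2, mul_zero, add_zero]
    have hsplit : ∑ k ∈ Finset.range (N+1), dff 1 y (k+1) * S2 (N+1) (k+1)
        = (∑ k ∈ Finset.range (N+1), dff 1 y (k+1) * ((k:ℂ)+1) * S2 N (k+1))
          + ∑ k ∈ Finset.range (N+1), dff 1 y k * (y - k) * S2 N k := by
      rw [← Finset.sum_add_distrib]
      refine Finset.sum_congr rfl fun k _ => ?_
      rw [S2_recurrence hS2]
      have h1 : dff 1 y (k+1) = dff 1 y k * (y - k) := by rw [dff_succ]; ring_nf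
      rw [h1]; ring
    rw [hsplit]
    have h1 : ∑ k ∈ Finset.range (N+1), dff 1 y (k+1) * ((k:ℂ)+1) * S2 N (k+1)
        = ∑ k ∈ Finset.range (N+1), dff 1 y k * (k:ℂ) * S2 N k := by
      have h2 : ∑ k ∈ Finset.range (N+2), dff 1 y k * (k:ℂ) * S2 N k
          = (∑ k ∈ Finset.range (N+1), dff 1 y (k+1) * ((k:ℂ)+1) * S2 N (k+1)) := by
        rw [Finset.sum_range_succ']
        push_cast
        simp
      have h3 : ∑ k ∈ Finset.range (N+2), dff 1 y k * (k:ℂ) * S2 N k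
          = ∑ k ∈ Finset.range (N+1), dff 1 y k * (k:ℂ) * S2 N k := by
        rw [Finset.sum_range_succ, S2_eq_zero hS2 (Nat.lt_succ_self N), mul_zero, add_zero]
      rw [← h2, h3]
    rw [h1, ← Finset.sum_add_distrib]
    have h4 : ∑ k ∈ Finset.range (N+1), (dff 1 y k * (k:ℂ) * S2 N k + dff 1 y k * (y - k) * S2 N k)
        = y * ∑ k ∈ Finset.range (N+1), dff 1 y k * S2 N k := by
      rw [Finset.mul_sum]
      exact Finset.sum_congr rfl fun k _ => by ring
    rw [h4, ih]
    ring

/-- Key identity: `Σ_k (x)_{k,L} S2(n,k) L^{n-k} = x^n`. -/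
lemma starLam {L : ℂ} (hL : L ≠ 0) (x : ℂ) (N : ℕ) :
    ∑ k ∈ Finset.range (N+1), dff L x k * S2 N k * L ^ (N-k) = x ^ N := by
  have hdff : ∀ k, dff L x k = L^k * dff 1 (x/L) k := by
    intro k
    unfold dff
    have hfac : ∀ j ∈ Finset.range k, x - (j:ℂ) * L = L * ((x/L) - (j:ℂ) * 1) := by
      intro j _
      field_simp
    rw [Finset.prod_congr rfl hfac, Finset.prod_mul_distrib, Finset.prod_const,
      Finset.card_range]
  have hmain : ∑ k ∈ Finset.range (N+1), dff L x k * S2 N k * L ^ (N-k)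
      = L^N * ∑ k ∈ Finset.range (N+1), dff 1 (x/L) k * S2 N k := by
    rw [Finset.mul_sum]
    refine Finset.sum_congr rfl fun k hk => ?_
    have hkN : k ≤ N := Nat.lt_succ_iff.mp (Finset.mem_range.mp hk)
    rw [hdff k]
    have : L^k * L^(N-k) = L^N := by rw [← pow_add, Nat.add_sub_cancel' hkN]
    calc L ^ k * dff 1 (x / L) k * S2 N k * L ^ (N - k)
        = (L^k * L^(N-k)) * (dff 1 (x/L) k * S2 N k) := by ring
      _ = L^N * (dff 1 (x / L) k * S2 N k) := by rw [this]
  rw [hmain, starOne hS2]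
  rw [div_pow, mul_div_cancel₀ _ (pow_ne_zero N hL)]

lemma coeff_phiS_pow {L : ℂ} (hL : L ≠ 0) {d N : ℕ} (h : d ≤ N) :
    PowerSeries.coeff (R := ℂ) N (phiS L ^ d)
      = S2 N d * L ^ (N - d) * d.factorial / N.factorial := by
  have h1 : phiS L ^ d = (PowerSeries.C (R := ℂ)) (L⁻¹ ^ d) * (expS L - 1) ^ d := by
    rw [phiS, mul_pow, map_pow]
  have h2 : (expS L - 1 : PowerSeries ℂ) ^ d = PowerSeries.rescale L ((expS 1 - 1) ^ d) := by
    rw [map_pow, map_sub, map_one, rescale_expS]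
  rw [h1, h2, PowerSeries.coeff_C_mul, PowerSeries.coeff_rescale, coeff_pow_expS_sub_one hS2]
  have h3 : L ^ (N - d) = L ^ N * (L ^ d)⁻¹ := by
    rw [pow_sub₀ L hL h]
  rw [h3, inv_pow]
  ring

end WithS2

/- ### substitution machinery -/

lemma Pol_coeff (N : ℕ) (f : PowerSeries ℂ) (m : ℕ) :
    (Pol N f).coeff m = if m ≤ N then PowerSeries.coeff (R := ℂ) m f else 0 := by
  unfold Pol
  rw [Polynomial.finset_sum_coeff]
  simp only [Polynomial.coeff_C_mul, Polynomial.coeff_X_pow, mul_ite, mul_one, mul_zero]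
  rw [Finset.sum_ite_eq (Finset.range (N+1)) m (fun d => PowerSeries.coeff (R := ℂ) d f)]
  simp [Nat.lt_succ_iff]

lemma ev_Pol (L : ℂ) (N : ℕ) (f : PowerSeries ℂ) :
    ev L (Pol N f) = ∑ d ∈ Finset.range (N+1),
      (PowerSeries.C (R := ℂ)) (PowerSeries.coeff (R := ℂ) d f) * phiS L ^ d := by
  unfold ev Pol
  rw [Polynomial.eval₂_finset_sum]
  refine Finset.sum_congr rfl fun d _ => ?_
  rw [Polynomial.eval₂_mul, Polynomial.eval₂_C, Polynomial.eval₂_X_pow]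

lemma coeff_ev_Pol (L : ℂ) {p N : ℕ} (h : p ≤ N) (f : PowerSeries ℂ) :
    PowerSeries.coeff (R := ℂ) p (ev L (Pol N f)) = PowerSeries.coeff (R := ℂ) p (Phi L f) := by
  rw [ev_Pol, map_sum]
  simp only [PowerSeries.coeff_C_mul]
  rw [Phi, PowerSeries.coeff_mk]
  symm
  refine Finset.sum_subset ?_ ?_
  · intro d hd
    rw [Finset.mem_range] at hd ⊢
    omega
  · intro d _ hdp
    rw [Finset.mem_range, not_lt] at hdp
    rw [coeff_phiS_pow_eq_zero (by omega : p < d), mul_zero]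

lemma Phi_mul (L : ℂ) (f g : PowerSeries ℂ) : Phi L (f * g) = Phi L f * Phi L g := by
  ext N
  have hdvd : (Polynomial.X : Polynomial ℂ)^(N+1) ∣ (Pol N f * Pol N g - Pol N (f*g)) := by
    rw [Polynomial.X_pow_dvd_iff]
    intro m hm
    have hm' : m ≤ N := Nat.lt_succ_iff.mp hm
    rw [Polynomial.coeff_sub, Polynomial.coeff_mul, Pol_coeff, if_pos hm',
      PowerSeries.coeff_mul, sub_eq_zero]
    refine Finset.sum_congr rfl fun ab hab => ?_
    have hs := Finset.HasAntidiagonal.mem_antidiagonal.mp hab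
    rw [Pol_coeff, Pol_coeff, if_pos (by omega : ab.1 ≤ N), if_pos (by omega : ab.2 ≤ N)]
  obtain ⟨r, hr⟩ := hdvd
  have hr' : Pol N f * Pol N g = Pol N (f*g) + Polynomial.X^(N+1) * r := by
    linear_combination hr
  have hev : ev L (Pol N f) * ev L (Pol N g)
      = ev L (Pol N (f*g)) + phiS L ^ (N+1) * ev L r := by
    unfold ev
    rw [← Polynomial.eval₂_mul, hr']
    rw [Polynomial.eval₂_add, Polynomial.eval₂_mul, Polynomial.eval₂_X_pow]
  have hz : PowerSeries.coeff (R := ℂ) N (phiS L ^ (N+1) * ev L r) = 0 := by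
    have hdvd2 : (PowerSeries.X : PowerSeries ℂ)^(N+1) ∣ phiS L ^ (N+1) * ev L r :=
      Dvd.dvd.mul_right (pow_dvd_pow_of_dvd (X_dvd_phiS L) _) _
    exact PowerSeries.X_pow_dvd_iff.mp hdvd2 N (Nat.lt_succ_self N)
  have hR : PowerSeries.coeff (R := ℂ) N (Phi L f * Phi L g)
      = PowerSeries.coeff (R := ℂ) N (ev L (Pol N f) * ev L (Pol N g)) := by
    rw [PowerSeries.coeff_mul, PowerSeries.coeff_mul]
    refine Finset.sum_congr rfl fun ab hab => ?_
    have hs := Finset.HasAntidiagonal.mem_antidiagonal.mp hab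
    rw [coeff_ev_Pol L (by omega : ab.1 ≤ N), coeff_ev_Pol L (by omega : ab.2 ≤ N)]
  calc PowerSeries.coeff (R := ℂ) N (Phi L (f * g))
      = PowerSeries.coeff (R := ℂ) N (ev L (Pol N (f*g))) := (coeff_ev_Pol L le_rfl _).symm
    _ = PowerSeries.coeff (R := ℂ) N (ev L (Pol N (f*g)) + phiS L ^ (N+1) * ev L r) := by
        rw [map_add, hz, add_zero]
    _ = PowerSeries.coeff (R := ℂ) N (ev L (Pol N f) * ev L (Pol N g)) := by rw [← hev]
    _ = PowerSeries.coeff (R := ℂ) N (Phi L f * Phi L g) := hR.symm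

lemma Phi_add (L : ℂ) (f g : PowerSeries ℂ) : Phi L (f + g) = Phi L f + Phi L g := by
  ext N
  simp only [Phi, PowerSeries.coeff_mk, map_add, add_mul, Finset.sum_add_distrib]

lemma Phi_C (L : ℂ) (a : ℂ) : Phi L ((PowerSeries.C (R := ℂ)) a) = (PowerSeries.C (R := ℂ)) a := by
  ext N
  rw [Phi, PowerSeries.coeff_mk]
  simp only [PowerSeries.coeff_C, ite_mul, zero_mul]
  rw [Finset.sum_ite_eq' (Finset.range (N+1)) 0
    (fun d => a * PowerSeries.coeff (R := ℂ) N (phiS L ^ d))]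
  simp [PowerSeries.coeff_one, PowerSeries.coeff_C]

theorem stmt15 (lam : ℝ) (hlam : lam ≠ 0) (z : ℂ) (Ecl Ed : ℕ → ℂ) (S2 : ℕ → ℕ → ℂ)
    (hE : egf Ecl * (expS (1/2) + expS (-(1/2))) = 2 * expS z)
    (hEd : egf Ed * (degExp lam (1/2) + degExp lam (-(1/2))) = 2 * degExp lam z)
    (hS2 : ∀ k, (expS 1 - 1) ^ k = (PowerSeries.C : ℂ →+* PowerSeries ℂ) (Nat.factorial k) * egf (fun n => S2 n k))
    (n : ℕ) :
    Ecl n = ∑ k ∈ Finset.range (n+1), Ed k * S2 n k * (lam:ℂ)^(n-k) := by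
  set L : ℂ := (lam : ℂ) with hLdef
  have hL : L ≠ 0 := Complex.ofReal_ne_zero.mpr hlam
  have hPhiEgf : ∀ f : ℕ → ℂ, Phi L (egf f)
      = PowerSeries.mk (fun N =>
          (∑ k ∈ Finset.range (N+1), f k * S2 N k * L^(N-k)) / N.factorial) := by
    intro f
    ext N
    rw [Phi, PowerSeries.coeff_mk, PowerSeries.coeff_mk, Finset.sum_div]
    refine Finset.sum_congr rfl fun k hk => ?_
    have hkN : k ≤ N := Nat.lt_succ_iff.mp (Finset.mem_range.mp hk)
    rw [coeff_phiS_pow hS2 hL hkN, egf, PowerSeries.coeff_mk]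
    have hkf : ((k.factorial:ℂ)) ≠ 0 := by exact_mod_cast Nat.factorial_ne_zero k
    have hNf : ((N.factorial:ℂ)) ≠ 0 := by exact_mod_cast Nat.factorial_ne_zero N
    field_simp
  have hPhiDeg : ∀ x : ℂ, Phi L (degExp L x) = expS x := by
    intro x
    rw [degExp, hPhiEgf]
    ext N
    rw [PowerSeries.coeff_mk, starLam hS2 hL, coeff_expS]
  have hPhi2 : Phi L (2 : PowerSeries ℂ) = 2 := by
    have h2C : (2 : PowerSeries ℂ) = (PowerSeries.C (R := ℂ)) 2 := by
      rw [← map_ofNat ((PowerSeries.C (R := ℂ))) 2]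
    rw [h2C, Phi_C]
  have happ := congrArg (Phi L) hEd
  rw [Phi_mul, Phi_add, Phi_mul, hPhiDeg, hPhiDeg, hPhiDeg, hPhi2] at happ
  have hD0 : (expS (1/2) + expS (-(1/2)) : PowerSeries ℂ) ≠ 0 := by
    intro h
    have hc := congrArg (PowerSeries.constantCoeff (R := ℂ)) h
    rw [map_add, constantCoeff_expS, constantCoeff_expS] at hc
    norm_num at hc
  have hcancel : egf Ecl = Phi L (egf Ed) :=
    mul_right_cancel₀ hD0 (hE.trans happ.symm)
  have hco := congrArg (PowerSeries.coeff (R := ℂ) n) hcancel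
  rw [hPhiEgf, egf, PowerSeries.coeff_mk, PowerSeries.coeff_mk] at hco
  have hnf : ((n.factorial:ℂ)) ≠ 0 := by exact_mod_cast Nat.factorial_ne_zero n
  have := congrArg (fun c : ℂ => c * n.factorial) hco
  simpa [div_mul_cancel₀, hnf] using this
end

section
/- For every positive integer n, $B_{n,\lambda}^{(s)}(x,y)=\sum_{m=0}^{n}\sum_{k=0}^{m}\sum_{l=0}^{\lfloor (k-1)/2\rfloor}\binom{n}{m}\binom{k}{2l+1}(-1)^l\lambda^{n-k}S_1(m,k)\,b_{n-m}\,B_{k-2l-1}(x)\,y^{2l+1}$. -/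
open PowerSeries Finset Complex

/-! ### Basic egf lemmas -/

lemma egf_coeff (f : ℕ → ℂ) (n : ℕ) : PowerSeries.coeff (R := ℂ) n (egf f) = f n / n.factorial := by
  simp [egf]

lemma egf_inj {f g : ℕ → ℂ} (h : egf f = egf g) (n : ℕ) : f n = g n := by
  have := congrArg (PowerSeries.coeff (R := ℂ) n) h
  rw [egf_coeff, egf_coeff] at this
  have hf : ((n.factorial : ℂ)) ≠ 0 := Nat.cast_ne_zero.mpr n.factorial_ne_zero
  field_simp at this
  exact this

lemma choose_cast_eq {m n : ℕ} (h : m ≤ n) :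
    (n.choose m : ℂ) * m.factorial * (n - m).factorial = n.factorial := by
  exact_mod_cast congrArg (Nat.cast : ℕ → ℂ) (Nat.choose_mul_factorial_mul_factorial h)

lemma egf_mul (f g : ℕ → ℂ) :
    egf f * egf g = egf (fun n => ∑ m ∈ Finset.range (n+1), (n.choose m : ℂ) * f m * g (n-m)) := by
  ext n
  rw [PowerSeries.coeff_mul, Finset.Nat.sum_antidiagonal_eq_sum_range_succ_mk, egf_coeff,
    Finset.sum_div]
  refine Finset.sum_congr rfl fun m hm => ?_
  rw [Finset.mem_range] at hm
  have hmn : m ≤ n := Nat.lt_succ_iff.mp hm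
  rw [egf_coeff, egf_coeff]
  have h1 : ((m.factorial : ℂ)) ≠ 0 := Nat.cast_ne_zero.mpr m.factorial_ne_zero
  have h2 : (((n - m).factorial : ℂ)) ≠ 0 := Nat.cast_ne_zero.mpr (n - m).factorial_ne_zero
  have h3 : ((n.factorial : ℂ)) ≠ 0 := Nat.cast_ne_zero.mpr n.factorial_ne_zero
  field_simp
  rw [← choose_cast_eq hmn]
  ring

lemma egf_add (f g : ℕ → ℂ) : egf (fun n => f n + g n) = egf f + egf g := by
  ext n
  simp [egf_coeff, add_div]

lemma egf_congr {f g : ℕ → ℂ} (h : ∀ n, f n = g n) : egf f = egf g := by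
  ext n
  rw [egf_coeff, egf_coeff, h n]

lemma egf_sub (f g : ℕ → ℂ) : egf (fun n => f n - g n) = egf f - egf g := by
  ext n
  simp [egf_coeff, sub_div]

lemma C_mul_egf (a : ℂ) (f : ℕ → ℂ) : PowerSeries.C (R := ℂ) a * egf f = egf (fun n => a * f n) := by
  ext n
  simp [egf_coeff, PowerSeries.coeff_C_mul]
  ring

lemma X_mul_egf (f : ℕ → ℂ) :
    (PowerSeries.X : PowerSeries ℂ) * egf f = egf (fun n => n * f (n-1)) := by
  ext n
  cases n with
  | zero => simp [egf_coeff]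
  | succ k =>
    rw [PowerSeries.coeff_succ_X_mul, egf_coeff, egf_coeff]
    have h1 : ((k.factorial : ℂ)) ≠ 0 := Nat.cast_ne_zero.mpr k.factorial_ne_zero
    have h2 : ((k:ℂ) + 1) ≠ 0 := by
      have := Nat.cast_ne_zero (R := ℂ) |>.mpr k.succ_ne_zero
      push_cast at this; exact this
    simp only [Nat.succ_sub_one, Nat.factorial_succ, Nat.cast_mul]
    push_cast
    field_simp

lemma rescale_egf (a : ℂ) (f : ℕ → ℂ) :
    PowerSeries.rescale a (egf f) = egf (fun n => a ^ n * f n) := by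
  ext n
  rw [PowerSeries.coeff_rescale, egf_coeff, egf_coeff]
  ring

lemma C_ne_zero {a : ℂ} (ha : a ≠ 0) : (PowerSeries.C (R := ℂ) a) ≠ 0 := by
  intro h
  have := congrArg (PowerSeries.constantCoeff (R := ℂ)) h
  simp at this
  exact ha this

/-! ### logS basics -/

noncomputable def psiS : PowerSeries ℂ := PowerSeries.mk fun n => (-1)^n / (n+1)

lemma logS_eq : logS = PowerSeries.X * psiS := by
  ext n
  cases n with
  | zero => simp [logS]
  | succ k =>
    rw [PowerSeries.coeff_succ_X_mul]
    simp only [logS, psiS, PowerSeries.coeff_mk, Nat.succ_ne_zero, if_false]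
    push_cast
    ring

lemma coeff_one_logS : PowerSeries.coeff (R := ℂ) 1 logS = 1 := by
  simp [logS]

/-! ### derivative lemmas -/

lemma derivative_egf (f : ℕ → ℂ) :
    PowerSeries.derivative ℂ (egf f) = egf (fun n => f (n+1)) := by
  ext n
  rw [PowerSeries.coeff_derivative, egf_coeff, egf_coeff]
  have h1 : ((n.factorial : ℂ)) ≠ 0 := Nat.cast_ne_zero.mpr n.factorial_ne_zero
  have h2 : ((n:ℂ) + 1) ≠ 0 := by
    have := Nat.cast_ne_zero (R := ℂ) |>.mpr n.succ_ne_zero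
    push_cast at this; exact this
  rw [Nat.factorial_succ]
  push_cast
  field_simp

lemma derivative_logS : PowerSeries.derivative ℂ logS = PowerSeries.mk (fun n => (-1)^n) := by
  ext n
  rw [PowerSeries.coeff_derivative]
  simp only [logS, PowerSeries.coeff_mk, Nat.succ_ne_zero, if_false]
  have h2 : ((n:ℂ) + 1) ≠ 0 := by
    have := Nat.cast_ne_zero (R := ℂ) |>.mpr n.succ_ne_zero
    push_cast at this; exact this
  push_cast
  field_simp
  ring

lemma one_add_X_mul_dlogS :
    (1 + PowerSeries.X) * PowerSeries.derivative ℂ logS = 1 := by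
  rw [derivative_logS]
  ext n
  rw [add_mul, one_mul, map_add]
  cases n with
  | zero => simp [PowerSeries.coeff_zero_eq_constantCoeff]
  | succ k =>
    rw [PowerSeries.coeff_succ_X_mul]
    simp [PowerSeries.coeff_one, pow_succ]

/-- "Composition with `log(1+lt)/l`" at the level of egf coefficients. -/
noncomputable def gam (S1 : ℕ → ℕ → ℂ) (l : ℂ) (a : ℕ → ℂ) : PowerSeries ℂ :=
  egf (fun n => ∑ k ∈ Finset.range (n+1), S1 n k * l^(n-k) * a k)

lemma gam_sub (S1 : ℕ → ℕ → ℂ) (l : ℂ) (p q : ℕ → ℂ) :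
    gam S1 l (fun k => p k - q k) = gam S1 l p - gam S1 l q := by
  unfold gam
  rw [← egf_sub]
  refine egf_congr fun n => ?_
  rw [← Finset.sum_sub_distrib]
  exact Finset.sum_congr rfl fun k _ => by ring

lemma C_mul_gam (a : ℂ) (S1 : ℕ → ℕ → ℂ) (l : ℂ) (p : ℕ → ℂ) :
    PowerSeries.C (R := ℂ) a * gam S1 l p = gam S1 l (fun k => a * p k) := by
  unfold gam
  rw [C_mul_egf]
  refine egf_congr fun n => ?_
  rw [Finset.mul_sum]
  exact Finset.sum_congr rfl fun k _ => by ring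

lemma sum_square_eq_sum_triangle (n : ℕ) (F : ℕ → ℕ → ℂ)
    (hF : ∀ j i, n < j + i → F j i = 0) :
    (∑ j ∈ Finset.range (n+1), ∑ i ∈ Finset.range (n+1), F j i)
      = ∑ k ∈ Finset.range (n+1), ∑ j ∈ Finset.range (k+1), F j (k-j) := by
  rw [← Finset.sum_product', Finset.sum_sigma']
  rw [← Finset.sum_filter_add_sum_filter_not
    (Finset.range (n+1) ×ˢ Finset.range (n+1)) (fun p => p.1 + p.2 ≤ n)]
  have hzero : ∑ p ∈ (Finset.range (n+1) ×ˢ Finset.range (n+1)).filter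
      (fun p => ¬ p.1 + p.2 ≤ n), F p.1 p.2 = 0 := by
    refine Finset.sum_eq_zero fun p hp => ?_
    rw [Finset.mem_filter] at hp
    exact hF p.1 p.2 (by omega)
  rw [hzero, add_zero]
  refine Finset.sum_nbij' (fun p => (⟨p.1 + p.2, p.1⟩ : (_ : ℕ) × ℕ))
    (fun x => (x.2, x.1 - x.2)) ?_ ?_ ?_ ?_ ?_
  · intro p hp
    simp only [Finset.mem_filter, Finset.mem_product, Finset.mem_range] at hp
    simp only [Finset.mem_sigma, Finset.mem_range]
    omega
  · intro x hx
    simp only [Finset.mem_sigma, Finset.mem_range] at hx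
    simp only [Finset.mem_filter, Finset.mem_product, Finset.mem_range]
    omega
  · intro p hp
    simp only [add_tsub_cancel_left]
  · intro x hx
    simp only [Finset.mem_sigma, Finset.mem_range] at hx
    have h2 : x.snd + (x.fst - x.snd) = x.fst := by omega
    show (⟨x.snd + (x.fst - x.snd), x.snd⟩ : (_ : ℕ) × ℕ) = x
    rw [h2]
  · intro p hp
    simp only [add_tsub_cancel_left]

lemma odd_sum (f : ℕ → ℂ) (hf : ∀ r, f (2*r) = 0) (N : ℕ) :
    ∑ m ∈ Finset.range (2*N+1), f m = ∑ l ∈ Finset.range N, f (2*l+1) := by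
  induction N with
  | zero =>
    rw [Finset.sum_range_one]
    simpa using hf 0
  | succ N ih =>
    have h1 : 2*(N+1)+1 = (2*N+1) + 1 + 1 := by omega
    rw [h1, Finset.sum_range_succ, Finset.sum_range_succ, ih, Finset.sum_range_succ]
    have h2 : 2*N+1+1 = 2*(N+1) := by omega
    rw [h2, hf (N+1), add_zero]

/-! ### Lemmas about S1 derived from hS1 -/

section S1sec

variable {S1 : ℕ → ℕ → ℂ}
variable (hS1 : ∀ j, logS ^ j = PowerSeries.C (R := ℂ) (Nat.factorial j) * egf (fun k => S1 k j))

include hS1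

lemma S1_coeff (n j : ℕ) : PowerSeries.coeff (R := ℂ) n (logS ^ j) = (j.factorial : ℂ) * (S1 n j / n.factorial) := by
  rw [hS1 j, PowerSeries.coeff_C_mul, egf_coeff]

lemma S1_lt {n j : ℕ} (h : n < j) : S1 n j = 0 := by
  have h0 : PowerSeries.coeff (R := ℂ) n (logS ^ j) = 0 := by
    rw [logS_eq, mul_pow, PowerSeries.coeff_X_pow_mul']
    simp [Nat.not_le.mpr h]
  rw [S1_coeff hS1] at h0
  have h1 : ((j.factorial : ℂ)) ≠ 0 := Nat.cast_ne_zero.mpr j.factorial_ne_zero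
  have h2 : ((n.factorial : ℂ)) ≠ 0 := Nat.cast_ne_zero.mpr n.factorial_ne_zero
  field_simp at h0
  rcases mul_eq_zero.mp (h0.trans (mul_zero _)) with h' | h'
  · exact absurd h' h1
  · exact h'

lemma S1_diag (n : ℕ) : S1 n n = 1 := by
  have h0 : PowerSeries.coeff (R := ℂ) n (logS ^ n) = 1 := by
    rw [logS_eq, mul_pow, PowerSeries.coeff_X_pow_mul']
    simp only [le_refl, if_true, Nat.sub_self, PowerSeries.coeff_zero_eq_constantCoeff, map_pow]
    have hpsi : PowerSeries.constantCoeff (R := ℂ) psiS = 1 := by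
      rw [← PowerSeries.coeff_zero_eq_constantCoeff]
      simp [psiS]
    rw [hpsi, one_pow]
  rw [S1_coeff hS1] at h0
  have h1 : ((n.factorial : ℂ)) ≠ 0 := Nat.cast_ne_zero.mpr n.factorial_ne_zero
  field_simp at h0
  exact h0

lemma S1_zero (n : ℕ) : S1 n 0 = if n = 0 then 1 else 0 := by
  have h0 : PowerSeries.coeff (R := ℂ) n (logS ^ 0) = if n = 0 then 1 else 0 := by
    rw [pow_zero]
    simp [PowerSeries.coeff_one]
  rw [S1_coeff hS1] at h0
  have h2 : ((n.factorial : ℂ)) ≠ 0 := Nat.cast_ne_zero.mpr n.factorial_ne_zero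
  cases n with
  | zero => simpa using h0
  | succ k =>
    simp only [Nat.succ_ne_zero, if_false] at h0 ⊢
    simpa [Nat.factorial_zero, div_eq_zero_iff, h2] using h0

lemma S1_rec (n k : ℕ) : S1 (n+1) (k+1) = S1 n k - n * S1 n (k+1) := by
  have hfac : (((k+1).factorial : ℂ)) ≠ 0 := Nat.cast_ne_zero.mpr (k+1).factorial_ne_zero
  have key : (1 + PowerSeries.X) * PowerSeries.derivative ℂ (logS ^ (k+1))
      = (k+1 : ℕ) • (logS ^ k) := by
    rw [Derivation.leibniz_pow, Nat.add_sub_cancel, smul_eq_mul, mul_smul_comm,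
      mul_left_comm, one_add_X_mul_dlogS, mul_one]
  have hD : PowerSeries.derivative ℂ (logS ^ (k+1))
      = PowerSeries.C (R := ℂ) (((k+1).factorial : ℂ)) * egf (fun m => S1 (m+1) (k+1)) := by
    rw [hS1 (k+1), Derivation.leibniz, PowerSeries.derivative_C, derivative_egf]
    simp [smul_eq_mul]
  rw [hD, hS1 k] at key
  have hLHS : (1 + PowerSeries.X) *
      (PowerSeries.C (R := ℂ) (((k+1).factorial : ℂ)) * egf (fun m => S1 (m+1) (k+1)))
      = PowerSeries.C (R := ℂ) (((k+1).factorial : ℂ)) *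
        egf (fun m => S1 (m+1) (k+1) + m * S1 (m-1+1) (k+1)) := by
    rw [egf_add, ← X_mul_egf (fun t => S1 (t+1) (k+1))]
    ring
  rw [hLHS] at key
  have hRHS : (k+1 : ℕ) • (PowerSeries.C (R := ℂ) ((k.factorial : ℂ)) * egf (fun m => S1 m k))
      = PowerSeries.C (R := ℂ) (((k+1).factorial : ℂ)) * egf (fun m => S1 m k) := by
    rw [nsmul_eq_mul, ← map_natCast (PowerSeries.C (R := ℂ)) (k+1), ← mul_assoc, ← map_mul]
    congr 2
    push_cast [Nat.factorial_succ]
    ring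
  rw [hRHS] at key
  have key2 := mul_left_cancel₀ (C_ne_zero hfac) key
  have := egf_inj key2 n
  cases n with
  | zero => simpa using this
  | succ m =>
    simp only [Nat.succ_sub_one] at this ⊢
    push_cast at this ⊢
    linear_combination this

lemma S1_GM (n i j : ℕ) :
    ∑ m ∈ Finset.range (n+1), (n.choose m : ℂ) * S1 m j * S1 (n-m) i
      = ((j+i).choose j : ℂ) * S1 n (j+i) := by
  have hj : ((j.factorial : ℂ)) ≠ 0 := Nat.cast_ne_zero.mpr j.factorial_ne_zero
  have hi : ((i.factorial : ℂ)) ≠ 0 := Nat.cast_ne_zero.mpr i.factorial_ne_zero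
  have h := hS1 (j+i)
  rw [pow_add, hS1 j, hS1 i] at h
  have hrw : (((j+i).factorial : ℕ) : ℂ)
      = ((j+i).choose j : ℂ) * ((j.factorial : ℂ) * (i.factorial : ℂ)) := by
    rw [← choose_cast_eq (Nat.le_add_right j i)]
    simp [mul_assoc]
  rw [hrw] at h
  have ha : PowerSeries.C (R := ℂ) ((j.factorial : ℂ) * (i.factorial : ℂ))
      = PowerSeries.C (R := ℂ) ((j.factorial : ℂ)) * PowerSeries.C (R := ℂ) ((i.factorial : ℂ)) := map_mul _ _ _
  have h2 : PowerSeries.C (R := ℂ) ((j.factorial : ℂ) * (i.factorial : ℂ)) *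
      (egf (fun m => S1 m j) * egf (fun m => S1 m i))
      = PowerSeries.C (R := ℂ) ((j.factorial : ℂ) * (i.factorial : ℂ)) *
        (PowerSeries.C (R := ℂ) (((j+i).choose j : ℂ)) * egf (fun m => S1 m (j+i))) := by
    rw [map_mul, map_mul] at h
    rw [ha]
    linear_combination h
  have h3 := mul_left_cancel₀ (C_ne_zero (mul_ne_zero hj hi)) h2
  rw [egf_mul, C_mul_egf] at h3
  exact egf_inj h3 n

lemma stir (l z : ℂ) (n : ℕ) :
    dff l z n = ∑ k ∈ Finset.range (n+1), S1 n k * l^(n-k) * z^k := by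
  induction n with
  | zero => simp [dff, S1_diag hS1 0]
  | succ n ih =>
    have step : dff l z (n+1) = dff l z n * (z - n * l) := Finset.prod_range_succ _ n
    rw [step, ih]
    rw [Finset.sum_range_succ' (f := fun k => S1 (n+1) k * l^(n+1-k) * z^k)]
    have hz : S1 (n+1) 0 * l^(n+1-0) * z^0 = 0 := by
      rw [S1_zero hS1]
      simp
    rw [hz, add_zero]
    have hterm : ∀ k ∈ Finset.range (n+1),
        S1 (n+1) (k+1) * l^(n+1-(k+1)) * z^(k+1)
        = S1 n k * l^(n-k) * z^(k+1) - (n : ℂ) * (S1 n (k+1) * l^(n-k) * z^(k+1)) := by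
      intro k hk
      rw [S1_rec hS1 n k]
      have : n+1-(k+1) = n-k := by omega
      rw [this]
      ring
    rw [Finset.sum_congr rfl hterm, Finset.sum_sub_distrib, mul_sub]
    congr 1
    · -- ∑ S1 n k l^{n-k} z^{k+1} = (∑ S1 n k l^{n-k} z^k) * z
      rw [Finset.sum_mul]
      refine Finset.sum_congr rfl fun k _ => ?_
      rw [pow_succ]
      ring
    · -- ∑ n * S1 n (k+1) l^{n-k} z^{k+1} = (∑ S1 n k l^{n-k} z^k) * (n * l)
      rw [Finset.sum_mul]
      rw [Finset.sum_range_succ' (f := fun k => S1 n k * l^(n-k) * z^k * ((n:ℂ) * l))]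
      have h0 : S1 n 0 * l^(n-0) * z^0 * ((n:ℂ) * l) = 0 ∨ n = 0 := by
        cases n with
        | zero => right; rfl
        | succ m =>
          left
          rw [S1_zero hS1]
          simp
      rcases h0 with h0 | h0
      · rw [h0, add_zero, Finset.sum_range_succ]
        rw [S1_lt hS1 (Nat.lt_succ_self n)]
        simp only [mul_zero, zero_mul, add_zero]
        refine Finset.sum_congr rfl fun k hk => ?_
        rw [Finset.mem_range] at hk
        have h1 : n - k = n - (k+1) + 1 := by omega
        rw [h1, pow_succ]
        ring
      · subst h0
        simp [S1_lt hS1 (Nat.lt_succ_self 0)]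

lemma gam_degExp (l z : ℂ) : degExp l z = gam S1 l (fun k => z^k) := by
  simp only [degExp, gam]
  exact egf_congr fun n => stir hS1 l z n

lemma gam_mul (l : ℂ) (a a' : ℕ → ℂ) :
    gam S1 l a * gam S1 l a'
      = gam S1 l (fun k => ∑ j ∈ Finset.range (k+1), (k.choose j : ℂ) * a j * a' (k-j)) := by
  unfold gam
  rw [egf_mul]
  refine egf_congr fun n => ?_
  have hL : ∀ m ∈ Finset.range (n+1),
      ((n.choose m : ℂ)) * (∑ j ∈ Finset.range (m+1), S1 m j * l^(m-j) * a j)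
        * (∑ i ∈ Finset.range (n-m+1), S1 (n-m) i * l^(n-m-i) * a' i)
      = ∑ j ∈ Finset.range (n+1), ∑ i ∈ Finset.range (n+1),
          (n.choose m : ℂ) * S1 m j * S1 (n-m) i * l^(n-(j+i)) * a j * a' i := by
    intro m hm
    rw [Finset.mem_range] at hm
    have e1 : (∑ j ∈ Finset.range (m+1), S1 m j * l^(m-j) * a j)
        = ∑ j ∈ Finset.range (n+1), S1 m j * l^(m-j) * a j := by
      refine Finset.sum_subset ?_ ?_
      · intro t ht
        rw [Finset.mem_range] at *
        omega
      · intro t ht hnt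
        rw [Finset.mem_range] at ht hnt
        rw [S1_lt hS1 (by omega)]
        ring
    have e2 : (∑ i ∈ Finset.range (n-m+1), S1 (n-m) i * l^(n-m-i) * a' i)
        = ∑ i ∈ Finset.range (n+1), S1 (n-m) i * l^(n-m-i) * a' i := by
      refine Finset.sum_subset ?_ ?_
      · intro t ht
        rw [Finset.mem_range] at *
        omega
      · intro t ht hnt
        rw [Finset.mem_range] at ht hnt
        rw [S1_lt hS1 (by omega)]
        ring
    rw [e1, e2, mul_assoc, Finset.sum_mul_sum, Finset.mul_sum]
    refine Finset.sum_congr rfl fun j hj => ?_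
    rw [Finset.mul_sum]
    refine Finset.sum_congr rfl fun i hi => ?_
    rcases le_or_gt j m with h1 | h1
    · rcases le_or_gt i (n-m) with h2 | h2
      · have hpow : l^(m-j) * l^(n-m-i) = l^(n-(j+i)) := by
          rw [← pow_add]
          congr 1
          omega
        rw [← hpow]
        ring
      · rw [S1_lt hS1 (by omega : n - m < i)]
        ring
    · rw [S1_lt hS1 h1]
      ring
  rw [Finset.sum_congr rfl hL]
  rw [Finset.sum_comm]
  have hswap : ∀ j ∈ Finset.range (n+1),
      (∑ m ∈ Finset.range (n+1), ∑ i ∈ Finset.range (n+1),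
        (n.choose m : ℂ) * S1 m j * S1 (n-m) i * l^(n-(j+i)) * a j * a' i)
      = ∑ i ∈ Finset.range (n+1), ((j+i).choose j : ℂ) * S1 n (j+i) * l^(n-(j+i)) * a j * a' i := by
    intro j hj
    rw [Finset.sum_comm]
    refine Finset.sum_congr rfl fun i hi => ?_
    have hre : ∀ m ∈ Finset.range (n+1),
        (n.choose m : ℂ) * S1 m j * S1 (n-m) i * l^(n-(j+i)) * a j * a' i
        = ((n.choose m : ℂ) * S1 m j * S1 (n-m) i) * (l^(n-(j+i)) * a j * a' i) := by
      intro m _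
      ring
    rw [Finset.sum_congr rfl hre, ← Finset.sum_mul, S1_GM hS1 n i j]
    ring
  rw [Finset.sum_congr rfl hswap]
  rw [sum_square_eq_sum_triangle n
    (fun j i => ((j+i).choose j : ℂ) * S1 n (j+i) * l^(n-(j+i)) * a j * a' i)
    (fun j i hji => by
      have h0 := S1_lt hS1 hji
      simp only [h0, mul_zero, zero_mul])]
  refine Finset.sum_congr rfl fun k hk => ?_
  rw [Finset.mul_sum]
  refine Finset.sum_congr rfl fun j hj => ?_
  rw [Finset.mem_range] at hj
  have hjk : j + (k - j) = k := by omega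
  rw [hjk]
  ring

end S1sec

/-! ### classical sine helpers -/

noncomputable def sFun (y : ℝ) (k : ℕ) : ℂ :=
  (1/(2*Complex.I)) * ((Complex.I*(y:ℂ))^k - (-(Complex.I*(y:ℂ)))^k)

noncomputable def dhFun (k : ℕ) : ℂ := (1/2:ℂ)^k - (-(1/2):ℂ)^k

noncomputable def cFun (B : ℕ → ℂ) (y : ℝ) (k : ℕ) : ℂ :=
  ∑ j ∈ Finset.range (k+1), (k.choose j : ℂ) * sFun y j * B (k-j)

noncomputable def qFun (x y : ℝ) (k : ℕ) : ℂ :=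
  ∑ j ∈ Finset.range (k+1), (k.choose j : ℂ) * sFun y j * ((x:ℂ))^(k-j)

lemma sFun_even (y : ℝ) (r : ℕ) : sFun y (2*r) = 0 := by
  unfold sFun
  rw [Even.neg_pow ⟨r, by ring⟩]
  ring

lemma sFun_odd (y : ℝ) (l : ℕ) : sFun y (2*l+1) = (-1)^l * (y:ℂ)^(2*l+1) := by
  unfold sFun
  rw [Odd.neg_pow ⟨l, by ring⟩, sub_neg_eq_add, mul_pow, pow_succ, pow_mul, Complex.I_sq]
  have hI := Complex.I_ne_zero
  field_simp
  ring

lemma cFun_eq (B : ℕ → ℂ) (y : ℝ) (k : ℕ) :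
    cFun B y k = ∑ l ∈ Finset.range ((k-1)/2+1),
      (k.choose (2*l+1):ℂ) * (-1)^l * (y:ℂ)^(2*l+1) * B (k-2*l-1) := by
  unfold cFun
  have hsub : (∑ j ∈ Finset.range (k+1), (k.choose j : ℂ) * sFun y j * B (k-j))
      = ∑ j ∈ Finset.range (2*((k-1)/2+1)+1), (k.choose j : ℂ) * sFun y j * B (k-j) := by
    refine Finset.sum_subset ?_ ?_
    · intro t ht
      rw [Finset.mem_range] at *
      omega
    · intro t ht hnt
      rw [Finset.mem_range] at ht hnt
      rw [Nat.choose_eq_zero_of_lt (by omega)]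
      push_cast
      ring
  rw [hsub, odd_sum _ (fun r => by rw [sFun_even]; ring) ((k-1)/2+1)]
  refine Finset.sum_congr rfl fun l hl => ?_
  rw [sFun_odd]
  have h1 : k - (2*l+1) = k - 2*l - 1 := by omega
  rw [h1]
  ring

/-! ### degenerate-side key lemmas -/

section main

variable {S1 : ℕ → ℕ → ℂ} {b : ℕ → ℂ} {lam : ℂ}

lemma b_zero (hb : egf b * logS = PowerSeries.X) : b 0 = 1 := by
  have h := congrArg (PowerSeries.coeff (R := ℂ) 1) hb
  rw [PowerSeries.coeff_mul, Finset.Nat.sum_antidiagonal_eq_sum_range_succ_mk] at h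
  rw [Finset.sum_range_succ, Finset.sum_range_one] at h
  simp [egf_coeff, logS, PowerSeries.coeff_one_X] at h
  exact h

lemma rescale_C' (a r : ℂ) : PowerSeries.rescale a (PowerSeries.C (R := ℂ) r) = PowerSeries.C (R := ℂ) r := by
  ext m
  rw [PowerSeries.coeff_rescale]
  cases m with
  | zero => simp
  | succ t => simp [PowerSeries.coeff_C]

variable (hS1 : ∀ j, logS ^ j = PowerSeries.C (R := ℂ) (Nat.factorial j) * egf (fun k => S1 k j))

include hS1

lemma KI (j : ℕ) :
    PowerSeries.C (R := ℂ) (lam^j * (j.factorial : ℂ)) * egf (fun m => lam^(m-j) * S1 m j)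
      = PowerSeries.rescale lam (logS ^ j) := by
  have hr : PowerSeries.rescale lam (logS ^ j)
      = PowerSeries.C (R := ℂ) ((j.factorial : ℂ)) * egf (fun m => lam^m * S1 m j) := by
    rw [hS1 j, map_mul, rescale_C', rescale_egf]
  rw [hr, mul_comm (lam^j) ((j.factorial : ℂ)), map_mul, mul_assoc, C_mul_egf]
  refine congrArg (fun z => PowerSeries.C (R := ℂ) ((j.factorial : ℂ)) * z) (egf_congr fun m => ?_)
  rcases le_or_gt j m with h1 | h1
  · have : lam^j * lam^(m-j) = lam^m := by
      rw [← pow_add]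
      congr 1
      omega
    rw [← this]
    ring
  · rw [S1_lt hS1 h1]
    ring

lemma Dj (hb : egf b * logS = PowerSeries.X) (j : ℕ) :
    PowerSeries.C (R := ℂ) ((j:ℂ)+1) *
      (egf (fun m => lam^(m-(j+1)) * S1 m (j+1)) * egf (fun m => lam^m * b m))
      = PowerSeries.X * egf (fun m => lam^(m-j) * S1 m j) := by
  by_cases hlam : lam = 0
  · subst hlam
    have hH : ∀ jj : ℕ, PowerSeries.C (R := ℂ) ((jj.factorial : ℂ)) *
        egf (fun m => (0:ℂ)^(m-jj) * S1 m jj) = PowerSeries.X ^ jj := by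
      intro jj
      ext m
      rw [PowerSeries.coeff_C_mul, egf_coeff, PowerSeries.coeff_X_pow]
      rcases lt_trichotomy m jj with h1 | h1 | h1
      · rw [S1_lt hS1 h1, if_neg (by omega)]
        ring
      · subst h1
        rw [S1_diag hS1, if_pos rfl, Nat.sub_self, pow_zero]
        have : ((m.factorial : ℂ)) ≠ 0 := Nat.cast_ne_zero.mpr m.factorial_ne_zero
        field_simp
      · rw [zero_pow (by omega : m - jj ≠ 0), if_neg (by omega)]
        ring
    have hblam : egf (fun m => (0:ℂ)^m * b m) = 1 := by
      ext m
      rw [egf_coeff, PowerSeries.coeff_one]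
      cases m with
      | zero => simp [b_zero hb]
      | succ t => simp
    rw [hblam, mul_one]
    have hfj : ((j.factorial : ℂ)) ≠ 0 := Nat.cast_ne_zero.mpr j.factorial_ne_zero
    refine mul_left_cancel₀ (C_ne_zero hfj) ?_
    calc PowerSeries.C (R := ℂ) ((j.factorial : ℂ)) *
          (PowerSeries.C (R := ℂ) ((j:ℂ)+1) * egf (fun m => (0:ℂ)^(m-(j+1)) * S1 m (j+1)))
        = PowerSeries.C (R := ℂ) (((j+1).factorial : ℂ)) * egf (fun m => (0:ℂ)^(m-(j+1)) * S1 m (j+1)) := by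
          rw [← mul_assoc, ← map_mul]
          congr 2
          push_cast [Nat.factorial_succ]
          ring
      _ = PowerSeries.X ^ (j+1) := hH (j+1)
      _ = PowerSeries.X * (PowerSeries.C (R := ℂ) ((j.factorial : ℂ)) *
            egf (fun m => (0:ℂ)^(m-j) * S1 m j)) := by
          rw [hH j, pow_succ]
          ring
      _ = PowerSeries.C (R := ℂ) ((j.factorial : ℂ)) *
            (PowerSeries.X * egf (fun m => (0:ℂ)^(m-j) * S1 m j)) := by ring
  · have hk : (lam^(j+1) * (((j+1).factorial : ℂ))) ≠ 0 :=
      mul_ne_zero (pow_ne_zero _ hlam) (Nat.cast_ne_zero.mpr (j+1).factorial_ne_zero)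
    refine mul_left_cancel₀ (C_ne_zero hk) ?_
    have hbr : egf (fun m => lam^m * b m) * PowerSeries.rescale lam logS
        = PowerSeries.C (R := ℂ) lam * PowerSeries.X := by
      rw [← rescale_egf, ← map_mul, hb, PowerSeries.rescale_X]
    calc PowerSeries.C (R := ℂ) (lam^(j+1) * (((j+1).factorial : ℂ))) *
          (PowerSeries.C (R := ℂ) ((j:ℂ)+1) *
            (egf (fun m => lam^(m-(j+1)) * S1 m (j+1)) * egf (fun m => lam^m * b m)))
        = PowerSeries.C (R := ℂ) ((j:ℂ)+1) *
            ((PowerSeries.C (R := ℂ) (lam^(j+1) * (((j+1).factorial : ℂ))) *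
              egf (fun m => lam^(m-(j+1)) * S1 m (j+1))) * egf (fun m => lam^m * b m)) := by
          ring
      _ = PowerSeries.C (R := ℂ) ((j:ℂ)+1) *
            (PowerSeries.rescale lam (logS ^ (j+1)) * egf (fun m => lam^m * b m)) := by
          rw [KI hS1 (j+1)]
      _ = PowerSeries.C (R := ℂ) ((j:ℂ)+1) *
            (PowerSeries.rescale lam (logS ^ j) *
              (egf (fun m => lam^m * b m) * PowerSeries.rescale lam logS)) := by
          rw [pow_succ, map_mul]
          ring
      _ = PowerSeries.C (R := ℂ) ((j:ℂ)+1) *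
            (PowerSeries.rescale lam (logS ^ j) * (PowerSeries.C (R := ℂ) lam * PowerSeries.X)) := by
          rw [hbr]
      _ = PowerSeries.X * (PowerSeries.C (R := ℂ) ((j:ℂ)+1) * PowerSeries.C (R := ℂ) lam *
            PowerSeries.rescale lam (logS ^ j)) := by ring
      _ = PowerSeries.X * (PowerSeries.C (R := ℂ) ((j:ℂ)+1) * PowerSeries.C (R := ℂ) lam *
            (PowerSeries.C (R := ℂ) (lam^j * ((j.factorial : ℂ))) *
              egf (fun m => lam^(m-j) * S1 m j))) := by rw [KI hS1 j]
      _ = PowerSeries.C (R := ℂ) (lam^(j+1) * (((j+1).factorial : ℂ))) *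
            (PowerSeries.X * egf (fun m => lam^(m-j) * S1 m j)) := by
          have hC : PowerSeries.C (R := ℂ) (lam^(j+1) * (((j+1).factorial : ℂ)))
              = PowerSeries.C (R := ℂ) ((j:ℂ)+1) * PowerSeries.C (R := ℂ) lam *
                PowerSeries.C (R := ℂ) (lam^j * ((j.factorial : ℂ))) := by
            rw [← map_mul, ← map_mul]
            congr 1
            push_cast [Nat.factorial_succ, pow_succ]
            ring
          rw [hC]
          ring

lemma SD (hb : egf b * logS = PowerSeries.X) (n j : ℕ) :
    ((j:ℂ)+1) * ∑ m ∈ Finset.range (n+1), (n.choose m : ℂ)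
        * (lam^(m-(j+1)) * S1 m (j+1)) * (lam^(n-m) * b (n-m))
      = (n:ℂ) * (lam^((n-1)-j) * S1 (n-1) j) := by
  have h := Dj (lam := lam) hS1 hb j
  rw [egf_mul, C_mul_egf, X_mul_egf] at h
  exact egf_inj h n

lemma claimD (hb : egf b * logS = PowerSeries.X) (q : ℕ → ℂ) :
    gam S1 lam (fun k => (k:ℂ) * q (k-1)) * egf (fun m => lam^m * b m)
      = PowerSeries.X * gam S1 lam q := by
  unfold gam
  rw [egf_mul, X_mul_egf]
  refine egf_congr fun n => ?_
  cases n with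
  | zero => simp
  | succ N =>
    simp only [Nat.succ_sub_one]
    have e_inner : ∀ m ∈ Finset.range (N+2),
        (∑ k ∈ Finset.range (m+1), S1 m k * lam^(m-k) * ((k:ℂ) * q (k-1)))
        = ∑ j ∈ Finset.range (N+1), S1 m (j+1) * lam^(m-(j+1)) * (((j+1:ℕ):ℂ) * q j) := by
      intro m hm
      rw [Finset.mem_range] at hm
      rw [Finset.sum_range_succ']
      simp only [Nat.cast_zero, zero_mul, mul_zero, add_zero, Nat.succ_sub_one]
      refine Finset.sum_subset ?_ ?_
      · intro t ht
        rw [Finset.mem_range] at *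
        omega
      · intro t ht hnt
        rw [Finset.mem_range] at ht hnt
        rw [S1_lt hS1 (by omega)]
        ring
    have e_outer : ∀ m ∈ Finset.range (N+2),
        ((N+1).choose m : ℂ) *
          (∑ k ∈ Finset.range (m+1), S1 m k * lam^(m-k) * ((k:ℂ) * q (k-1)))
          * (lam^(N+1-m) * b (N+1-m))
        = ∑ j ∈ Finset.range (N+1), ((N+1).choose m : ℂ) *
            (S1 m (j+1) * lam^(m-(j+1)) * (((j+1:ℕ):ℂ) * q j)) * (lam^(N+1-m) * b (N+1-m)) := by
      intro m hm
      rw [e_inner m hm, Finset.mul_sum, Finset.sum_mul]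
    rw [Finset.sum_congr rfl e_outer, Finset.sum_comm, Finset.mul_sum]
    refine Finset.sum_congr rfl fun j hj => ?_
    have hterm : ∀ m ∈ Finset.range (N+2),
        ((N+1).choose m : ℂ) *
          (S1 m (j+1) * lam^(m-(j+1)) * (((j+1:ℕ):ℂ) * q j)) * (lam^(N+1-m) * b (N+1-m))
        = ((((j+1:ℕ):ℂ)) * q j) *
            (((N+1).choose m : ℂ) * (lam^(m-(j+1)) * S1 m (j+1)) * (lam^(N+1-m) * b (N+1-m))) := by
      intro m _
      ring
    rw [Finset.sum_congr rfl hterm, ← Finset.mul_sum]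
    have hSD := SD (lam := lam) hS1 hb (n := N+1) (j := j)
    simp only [Nat.succ_sub_one] at hSD
    calc (((j+1:ℕ):ℂ) * q j) *
          ∑ m ∈ Finset.range (N+1+1), ((N+1).choose m : ℂ) *
            (lam^(m-(j+1)) * S1 m (j+1)) * (lam^(N+1-m) * b (N+1-m))
        = q j * (((j:ℂ)+1) *
          ∑ m ∈ Finset.range (N+1+1), ((N+1).choose m : ℂ) *
            (lam^(m-(j+1)) * S1 m (j+1)) * (lam^(N+1-m) * b (N+1-m))) := by
          push_cast
          ring
      _ = q j * (((N+1:ℕ):ℂ) * (lam^(N-j) * S1 N j)) := by rw [hSD]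
      _ = ((N+1:ℕ):ℂ) * (S1 N j * lam^(N-j) * q j) := by ring

end main

theorem stmt19 (lam x y : ℝ) (Bs B b : ℕ → ℂ) (S1 : ℕ → ℕ → ℂ)
    (hBs : egf Bs * (degExp lam (1/2) - degExp lam (-(1/2))) =
      PowerSeries.X * degExp lam x * degSin lam y)
    (hB : egf B * (expS (1/2) - expS (-(1/2))) = PowerSeries.X * expS x)
    (hb : egf b * logS = PowerSeries.X)
    (hS1 : ∀ j, logS ^ j = (PowerSeries.C : ℂ →+* PowerSeries ℂ) (Nat.factorial j) * egf (fun k => S1 k j))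
    (n : ℕ) (hn : 0 < n) :
    Bs n = ∑ m ∈ Finset.range (n+1), ∑ k ∈ Finset.range (m+1), ∑ l ∈ Finset.range ((k-1)/2+1),
      (n.choose m : ℂ) * (k.choose (2*l+1) : ℂ) * (-1)^l * (lam:ℂ)^(n-k) * S1 m k *
        b (n-m) * B (k-2*l-1) * (y:ℂ)^(2*l+1) := by
  classical
  -- classical-side chain
  have hdh : egf dhFun = expS (1/2) - expS (-(1/2)) := egf_sub _ _
  have hEgf : egf (fun nn => ∑ m ∈ Finset.range (nn+1),
        (nn.choose m : ℂ) * cFun B y m * dhFun (nn-m))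
      = egf (fun nn => (nn:ℂ) * qFun x y (nn-1)) := by
    rw [← egf_mul, ← X_mul_egf]
    have h1 : egf (cFun B y) = egf (sFun y) * egf B := by
      rw [egf_mul]
      exact egf_congr fun k => rfl
    calc egf (cFun B y) * egf dhFun
        = egf (sFun y) * (egf B * (expS (1/2) - expS (-(1/2)))) := by
          rw [h1, hdh]; ring
      _ = egf (sFun y) * (PowerSeries.X * expS ((x:ℝ):ℂ)) := by rw [hB]
      _ = PowerSeries.X * (egf (sFun y) * egf (fun k => ((x:ℂ))^k)) := by
          rw [show expS ((x:ℝ):ℂ) = egf (fun k => ((x:ℂ))^k) from rfl]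
          ring
      _ = PowerSeries.X * egf (qFun x y) := by
          rw [egf_mul]
          exact congrArg _ (egf_congr fun k => rfl)
  have hch := egf_inj hEgf
  -- degenerate-side identifications
  have hD : degExp (lam:ℂ) (1/2) - degExp (lam:ℂ) (-(1/2)) = gam S1 (lam:ℂ) dhFun := by
    rw [gam_degExp hS1 ((lam:ℂ)) (1/2), gam_degExp hS1 ((lam:ℂ)) (-(1/2)), ← gam_sub]
    rfl
  have hSin : degSin (lam:ℂ) ((y:ℝ):ℂ) = gam S1 (lam:ℂ) (sFun y) := by
    unfold degSin
    rw [gam_degExp hS1 ((lam:ℂ)) (Complex.I*((y:ℝ):ℂ)),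
      gam_degExp hS1 ((lam:ℂ)) (-(Complex.I*((y:ℝ):ℂ))), ← gam_sub, C_mul_gam]
    rfl
  have hE : degExp (lam:ℂ) ((x:ℝ):ℂ) = gam S1 (lam:ℂ) (fun k => ((x:ℂ))^k) :=
    gam_degExp hS1 _ _
  have hcdh : gam S1 (lam:ℂ) (cFun B y) * gam S1 (lam:ℂ) dhFun
      = gam S1 (lam:ℂ) (fun k => (k:ℂ) * qFun x y (k-1)) := by
    rw [gam_mul hS1]
    exact congrArg (gam S1 (lam:ℂ)) (funext hch)
  have hmain : gam S1 (lam:ℂ) (cFun B y) * egf (fun m => (lam:ℂ)^m * b m) *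
      (degExp (lam:ℂ) (1/2) - degExp (lam:ℂ) (-(1/2)))
      = PowerSeries.X * degExp (lam:ℂ) ((x:ℝ):ℂ) * degSin (lam:ℂ) ((y:ℝ):ℂ) := by
    rw [hD, hE, hSin]
    calc gam S1 (lam:ℂ) (cFun B y) * egf (fun m => (lam:ℂ)^m * b m) * gam S1 (lam:ℂ) dhFun
        = (gam S1 (lam:ℂ) (cFun B y) * gam S1 (lam:ℂ) dhFun) *
            egf (fun m => (lam:ℂ)^m * b m) := by ring
      _ = gam S1 (lam:ℂ) (fun k => (k:ℂ) * qFun x y (k-1)) *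
            egf (fun m => (lam:ℂ)^m * b m) := by rw [hcdh]
      _ = PowerSeries.X * gam S1 (lam:ℂ) (qFun x y) := claimD hS1 hb (qFun x y)
      _ = PowerSeries.X * (gam S1 (lam:ℂ) (sFun y) * gam S1 (lam:ℂ) (fun k => ((x:ℂ))^k)) := by
          rw [gam_mul hS1]
          rfl
      _ = PowerSeries.X * gam S1 (lam:ℂ) (fun k => ((x:ℂ))^k) * gam S1 (lam:ℂ) (sFun y) := by
          ring
  have hDne : degExp (lam:ℂ) (1/2) - degExp (lam:ℂ) (-(1/2)) ≠ 0 := by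
    intro h0
    have h1 := congrArg (PowerSeries.coeff (R := ℂ) 1) h0
    rw [map_sub, map_zero] at h1
    simp only [degExp, egf_coeff, dff, Finset.prod_range_one, Nat.cast_zero, zero_mul,
      sub_zero, Nat.factorial_one, Nat.cast_one, div_one] at h1
    norm_num at h1
  have hfin : egf Bs = gam S1 (lam:ℂ) (cFun B y) * egf (fun m => (lam:ℂ)^m * b m) :=
    mul_right_cancel₀ hDne (hBs.trans hmain.symm)
  have hfin2 : egf Bs = egf (fun nn => ∑ m ∈ Finset.range (nn+1), (nn.choose m:ℂ) *
      (∑ k ∈ Finset.range (m+1), S1 m k * (lam:ℂ)^(m-k) * cFun B y k) *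
      ((lam:ℂ)^(nn-m) * b (nn-m))) := by
    rw [hfin]
    unfold gam
    rw [egf_mul]
  have hBsn := egf_inj hfin2 n
  rw [hBsn]
  refine Finset.sum_congr rfl fun m hm => ?_
  rw [Finset.mem_range] at hm
  rw [Finset.mul_sum, Finset.sum_mul]
  refine Finset.sum_congr rfl fun k hk => ?_
  rw [Finset.mem_range] at hk
  rw [cFun_eq]
  simp only [Finset.mul_sum, Finset.sum_mul]
  refine Finset.sum_congr rfl fun l hl => ?_
  have hpow : (lam:ℂ)^(m-k) * (lam:ℂ)^(n-m) = (lam:ℂ)^(n-k) := by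
    rw [← pow_add]
    congr 1
    omega
  rw [← hpow]
  ring
end
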